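/- Let A be an associative algebra over a field of characteristic ≠ 2 which is a module algebra over the Sweedler 4-dimensional Hopf algebra H (generators g, x as above). Then the bilinear map Ψ : A ⊗ A → A, Ψ(a ⊗ b) = (xg)(a) · x(b), is a Hochschild 2-cocycle of A: for all a, b, c ∈ A, a Ψ(b,c) − Ψ(ab,c) + Ψ(a,bc) − Ψ(a,b) c = 0. -/
import Mathlib


open TensorProduct

variable {k H A : Type*} [Field k] [Ring H] [Bialgebra k H] [Ring A] [Algebra k A]

/-- `ρ̂(x ⊗ y)(a ⊗ b) = ρ(x)(a) ρ(y)(b)` (uncurried). -/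
noncomputable def evHat (ρ : H →ₐ[k] Module.End k A) (t : H ⊗[k] H) (a b : A) : A :=
  LinearMap.mul' k A
    (TensorProduct.map ((LinearMap.applyₗ a).comp ρ.toLinearMap)
      ((LinearMap.applyₗ b).comp ρ.toLinearMap) t)

/-- if `A` is a module algebra over the Sweedler 4-dimensional Hopf algebra
`H` (char `k ≠ 2`), then `Ψ(a,b) = (xg)(a)·x(b)` is a Hochschild 2-cocycle:
`a Ψ(b,c) − Ψ(ab,c) + Ψ(a,bc) − Ψ(a,b)c = 0`. -/
theorem stmt8 (hchar : (2 : k) ≠ 0) (g x : H)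
    (hx2 : x * x = 0) (hg2 : g * g = 1) (hxg : x * g = -(g * x))
    (hΔg : Coalgebra.comul (R := k) g = g ⊗ₜ[k] g)
    (hΔx : Coalgebra.comul (R := k) x = x ⊗ₜ[k] 1 + g ⊗ₜ[k] x)
    (hεg : Coalgebra.counit (R := k) g = (1 : k))
    (hεx : Coalgebra.counit (R := k) x = (0 : k))
    (ρ : H →ₐ[k] Module.End k A)
    (hma : ∀ (h : H) (a b : A), ρ h (a * b) = evHat ρ (Coalgebra.comul (R := k) h) a b)
    (hone : ∀ h : H, ρ h (1 : A) = Coalgebra.counit (R := k) h • (1 : A))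
    (Ψ : A → A → A) (hΨ : ∀ a b, Ψ a b = ρ (x * g) a * ρ x b) :
    ∀ a b c : A, a * Ψ b c - Ψ (a * b) c + Ψ a (b * c) - Ψ a b * c = 0 := by
  intro a b c
  have hρ1 : ∀ y : A, ρ 1 y = y := fun y => by
    rw [map_one]; rfl
  have hG : ∀ u v : A, ρ g (u * v) = ρ g u * ρ g v := fun u v => by
    rw [hma, hΔg]; simp [evHat]
  have hX : ∀ u v : A, ρ x (u * v) = ρ x u * v + ρ g u * ρ x v := fun u v => by
    rw [hma, hΔx]; simp [evHat, hρ1]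
  have hGG : ∀ u : A, ρ g (ρ g u) = u := fun u => by
    rw [← Module.End.mul_apply, ← map_mul, hg2, hρ1]
  have hXG : ∀ u : A, ρ (x * g) u = ρ x (ρ g u) := fun u => by
    rw [map_mul]; rfl
  simp only [hΨ, hXG, hG, hX, hGG]
  noncomm_ring
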